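/- Let (Z_k)_{k≥0} be a stationary Gaussian sequence with E[Z_0^2] < ∞, let λ > 0, let q be an even positive integer, and set R_{Q,q}(λ, Z_k) := H_q(Z_k − e^{−λk} Z_0) − H_q(Z_k). Then for every p ≥ 1 there exists a constant c(λ, q, E[Z_0^2]) such that the L^p norm of (1/n) Σ_{k=0}^{n−1} R_{Q,q}(λ, Z_k) is at most c(λ, q, E[Z_0^2]) / n for all n ≥ 1. -/

import Mathlib

open MeasureTheory ProbabilityTheory Real
open scoped ENNReal NNReal


section AuxPoly
open Finset in

lemma aux_poly_bound (q : ℕ) (x b : ℝ) :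
    |(Polynomial.aeval (x - b) (Polynomial.hermite q) : ℝ)
      - (Polynomial.aeval x (Polynomial.hermite q) : ℝ)|
    ≤ ((∑ i ∈ Finset.range (q + 1), |((Polynomial.hermite q).coeff i : ℝ)|) * 2 ^ q)
        * (|b| * (1 + |x| + |b|) ^ q) := by
  set c : ℕ → ℝ := fun i => ((Polynomial.hermite q).coeff i : ℝ) with hc
  set base : ℝ := 1 + |x| + |b| with hbase
  have hbase1 : 1 ≤ base := by
    have := abs_nonneg x; have := abs_nonneg b; simp [hbase]; linarith
  have hbase0 : 0 ≤ base := le_trans zero_le_one hbase1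
  have hxb : |x| ≤ base := by simp [hbase]; linarith [abs_nonneg b]
  have hbb : |b| ≤ base := by simp [hbase]; linarith [abs_nonneg x]
  have haev : ∀ y : ℝ, (Polynomial.aeval y (Polynomial.hermite q) : ℝ)
      = ∑ i ∈ Finset.range (q + 1), c i * y ^ i := by
    intro y
    rw [Polynomial.aeval_eq_sum_range' (n := q + 1)
      (by rw [Polynomial.natDegree_hermite]; omega)]
    simp [hc, zsmul_eq_mul]
  have key : ∀ i, i ≤ q → |(x - b) ^ i - x ^ i| ≤ 2 ^ q * (|b| * base ^ q) := by
    intro i hi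
    have hx : (x - b) ^ i
        = (∑ j ∈ Finset.range i, x ^ j * (-b) ^ (i - j) * (i.choose j)) + x ^ i := by
      have h := add_pow x (-b) i
      rw [← sub_eq_add_neg] at h
      rw [h, Finset.sum_range_succ]
      simp
    rw [hx, add_sub_cancel_right]
    have hterm : ∀ j, j < i →
        |x ^ j * (-b) ^ (i - j) * (i.choose j)| ≤ (|b| * base ^ q) * (i.choose j) := by
      intro j hj
      rw [abs_mul, abs_mul, abs_pow, abs_pow, abs_neg, Nat.abs_cast]
      have hij : i - j = (i - j - 1) + 1 := by omega
      have h1 : |x| ^ j * |b| ^ (i - j) ≤ |b| * base ^ q := by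
        calc |x| ^ j * |b| ^ (i - j)
            = (|x| ^ j * |b| ^ (i - j - 1)) * |b| := by
              conv_lhs => rw [hij, pow_succ]
              ring
          _ ≤ (base ^ j * base ^ (i - j - 1)) * |b| := by gcongr
          _ = base ^ (j + (i - j - 1)) * |b| := by rw [pow_add]
          _ ≤ base ^ q * |b| := by
              have : j + (i - j - 1) ≤ q := by omega
              gcongr
          _ = |b| * base ^ q := mul_comm _ _
      exact mul_le_mul_of_nonneg_right h1 (Nat.cast_nonneg _)
    have hchoose : (∑ j ∈ Finset.range i, (i.choose j : ℝ)) ≤ 2 ^ q := by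
      have h1 : (∑ j ∈ Finset.range i, i.choose j) ≤ 2 ^ i := by
        rw [← Nat.sum_range_choose i]
        exact Finset.sum_le_sum_of_subset (Finset.range_subset_range.mpr (Nat.le_succ i))
      have h2 : (2 : ℕ) ^ i ≤ 2 ^ q := Nat.pow_le_pow_right (by omega) hi
      calc (∑ j ∈ Finset.range i, (i.choose j : ℝ))
          = ((∑ j ∈ Finset.range i, i.choose j : ℕ) : ℝ) := by push_cast; ring
        _ ≤ ((2 ^ q : ℕ) : ℝ) := by exact_mod_cast le_trans h1 h2
        _ = 2 ^ q := by push_cast; ring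
    calc |∑ j ∈ Finset.range i, x ^ j * (-b) ^ (i - j) * (i.choose j)|
        ≤ ∑ j ∈ Finset.range i, |x ^ j * (-b) ^ (i - j) * (i.choose j)| :=
          Finset.abs_sum_le_sum_abs _ _
      _ ≤ ∑ j ∈ Finset.range i, (|b| * base ^ q) * (i.choose j) :=
          Finset.sum_le_sum fun j hj => hterm j (Finset.mem_range.mp hj)
      _ = (|b| * base ^ q) * (∑ j ∈ Finset.range i, (i.choose j : ℝ)) := by
          rw [Finset.mul_sum]
      _ ≤ (|b| * base ^ q) * 2 ^ q := by
          have : (0:ℝ) ≤ |b| * base ^ q := by positivity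
          exact mul_le_mul_of_nonneg_left hchoose this
      _ = 2 ^ q * (|b| * base ^ q) := mul_comm _ _
  rw [haev (x - b), haev x, ← Finset.sum_sub_distrib]
  have : ∀ i ∈ Finset.range (q + 1),
      c i * (x - b) ^ i - c i * x ^ i = c i * ((x - b) ^ i - x ^ i) := by
    intro i _; ring
  rw [Finset.sum_congr rfl this]
  calc |∑ i ∈ Finset.range (q + 1), c i * ((x - b) ^ i - x ^ i)|
      ≤ ∑ i ∈ Finset.range (q + 1), |c i * ((x - b) ^ i - x ^ i)| :=
        Finset.abs_sum_le_sum_abs _ _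
    _ ≤ ∑ i ∈ Finset.range (q + 1), |c i| * (2 ^ q * (|b| * base ^ q)) := by
        refine Finset.sum_le_sum fun i hi => ?_
        rw [abs_mul]
        exact mul_le_mul_of_nonneg_left
          (key i (by have := Finset.mem_range.mp hi; omega)) (abs_nonneg _) |>.trans_eq rfl
    _ = ((∑ i ∈ Finset.range (q + 1), |c i|) * 2 ^ q) * (|b| * base ^ q) := by
        rw [← Finset.sum_mul, mul_assoc]
    _ = ((∑ i ∈ Finset.range (q + 1), |((Polynomial.hermite q).coeff i : ℝ)|) * 2 ^ q)
          * (|b| * base ^ q) := by rw [hc]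
end AuxPoly

section AuxGauss


lemma aux_abs_pow_mul_exp_integrable {b : ℝ} (hb : 0 < b) (N : ℕ) :
    Integrable (fun x : ℝ => |x| ^ N * Real.exp (-b * x ^ 2)) := by
  have hb2 : 0 < b / 2 := by linarith
  set K : ℝ := N.factorial * (2 / b) ^ N with hK
  have hK0 : 0 ≤ K := by positivity
  refine Integrable.mono' ((integrable_exp_neg_mul_sq hb2).const_mul (1 + K))
    ?_ (ae_of_all _ fun x => ?_)
  · exact ((measurable_norm.pow_const N).mul
      (((measurable_id.pow_const 2).const_mul (-b)).exp)).aestronglyMeasurable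
  · have hxN : |x| ^ N ≤ 1 + (x ^ 2) ^ N := by
      rcases le_or_gt (|x|) 1 with h | h
      · have : |x| ^ N ≤ 1 := pow_le_one₀ (abs_nonneg x) h
        nlinarith [pow_nonneg (sq_nonneg x) N]
      · have h1 : |x| ≤ x ^ 2 := by nlinarith [abs_nonneg x, sq_abs x]
        have : |x| ^ N ≤ (x ^ 2) ^ N := pow_le_pow_left₀ (abs_nonneg x) h1 N
        linarith
    have hy : (x ^ 2) ^ N ≤ K * Real.exp (b / 2 * x ^ 2) := by
      have hy0 : 0 ≤ b / 2 * x ^ 2 := by positivity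
      have h1 : (b / 2 * x ^ 2) ^ N / N.factorial ≤ Real.exp (b / 2 * x ^ 2) := by
        calc (b / 2 * x ^ 2) ^ N / N.factorial
            ≤ ∑ i ∈ Finset.range (N + 1), (b / 2 * x ^ 2) ^ i / i.factorial := by
              refine Finset.single_le_sum (f := fun i => (b / 2 * x ^ 2) ^ i / i.factorial)
                (fun i _ => by positivity) (Finset.self_mem_range_succ N)
          _ ≤ Real.exp (b / 2 * x ^ 2) := Real.sum_le_exp_of_nonneg hy0 _
      have h2 : (x ^ 2) ^ N = (2 / b) ^ N * (b / 2 * x ^ 2) ^ N := by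
        rw [← mul_pow]; congr 1; field_simp
      rw [h2, hK]
      have h3 : (b / 2 * x ^ 2) ^ N ≤ N.factorial * Real.exp (b / 2 * x ^ 2) := by
        rw [div_le_iff₀ (by positivity : (0:ℝ) < (N.factorial : ℝ))] at h1
        linarith [h1]
      calc (2 / b) ^ N * (b / 2 * x ^ 2) ^ N
          ≤ (2 / b) ^ N * (N.factorial * Real.exp (b / 2 * x ^ 2)) := by
            exact mul_le_mul_of_nonneg_left h3 (by positivity)
        _ = ↑N.factorial * (2 / b) ^ N * Real.exp (b / 2 * x ^ 2) := by ring
    have hexp : Real.exp (-b * x ^ 2) = Real.exp (-(b / 2) * x ^ 2) * Real.exp (-(b / 2) * x ^ 2) := by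
      rw [← Real.exp_add]; ring_nf
    have hle1 : Real.exp (-(b / 2) * x ^ 2) ≤ 1 :=
      Real.exp_le_one_iff.mpr (by nlinarith [sq_nonneg x])
    rw [Real.norm_eq_abs, abs_mul, abs_pow, abs_abs,
      abs_of_pos (Real.exp_pos _)]
    have e1 : (x ^ 2) ^ N * Real.exp (-(b / 2) * x ^ 2) ≤ K := by
      have := mul_le_mul_of_nonneg_right hy (le_of_lt (Real.exp_pos (-(b / 2) * x ^ 2)))
      calc (x ^ 2) ^ N * Real.exp (-(b / 2) * x ^ 2)
          ≤ K * Real.exp (b / 2 * x ^ 2) * Real.exp (-(b / 2) * x ^ 2) := this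
        _ = K := by rw [mul_assoc, ← Real.exp_add]; ring_nf; simp
    calc |x| ^ N * Real.exp (-b * x ^ 2)
        ≤ (1 + (x ^ 2) ^ N) * Real.exp (-b * x ^ 2) := by
          exact mul_le_mul_of_nonneg_right hxN (le_of_lt (Real.exp_pos _))
      _ = Real.exp (-(b / 2) * x ^ 2) * Real.exp (-(b / 2) * x ^ 2)
            + ((x ^ 2) ^ N * Real.exp (-(b / 2) * x ^ 2)) * Real.exp (-(b / 2) * x ^ 2) := by
          rw [hexp]; ring
      _ ≤ 1 * Real.exp (-(b / 2) * x ^ 2) + K * Real.exp (-(b / 2) * x ^ 2) := by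
          have := Real.exp_pos (-(b / 2) * x ^ 2)
          gcongr
      _ = (1 + K) * Real.exp (-(b / 2) * x ^ 2) := by ring




lemma aux_integrable_abs_pow_gaussian (v : NNReal) (N : ℕ) :
    Integrable (fun x : ℝ => |x| ^ N) (gaussianReal 0 v) := by
  by_cases hv : v = 0
  · subst hv
    rw [gaussianReal_zero_var]
    exact (integrable_const (|(0:ℝ)| ^ N)).congr (ae_eq_dirac (fun x : ℝ => |x| ^ N)).symm
  · rw [gaussianReal_of_var_ne_zero _ hv]
    rw [integrable_withDensity_iff (measurable_gaussianPDF _ _)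
      (ae_of_all _ fun x => ENNReal.ofReal_lt_top)]
    have hv0 : (0:ℝ) < (v : ℝ) := by positivity
    have hb : (0:ℝ) < (2 * (v : ℝ))⁻¹ := by positivity
    have heq : ∀ x : ℝ, |x| ^ N * (gaussianPDF 0 v x).toReal
        = (Real.sqrt (2 * Real.pi * v))⁻¹ * (|x| ^ N * Real.exp (-(2 * (v:ℝ))⁻¹ * x ^ 2)) := by
      intro x
      rw [gaussianPDF, ENNReal.toReal_ofReal (gaussianPDFReal_nonneg _ _ _), gaussianPDFReal]
      have : -(x - 0) ^ 2 / (2 * (v:ℝ)) = -(2 * (v:ℝ))⁻¹ * x ^ 2 := by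
        field_simp
        ring
      rw [this]; ring
    refine Integrable.congr ?_ (ae_of_all _ fun x => (heq x).symm)
    exact (aux_abs_pow_mul_exp_integrable hb N).const_mul _

lemma aux_memLp_gaussian (v : NNReal) (N : ℕ) :
    MemLp id (N : ℝ≥0∞) (gaussianReal 0 v) := by
  rcases Nat.eq_zero_or_pos N with h0 | hN
  · subst h0
    simpa using memLp_zero_iff_aestronglyMeasurable.mpr aestronglyMeasurable_id
  have hNe0 : (N : ℝ≥0∞) ≠ 0 := by
    simp only [ne_eq, Nat.cast_eq_zero]
    omega
  have hNtop : (N : ℝ≥0∞) ≠ ∞ := ENNReal.natCast_ne_top N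
  refine (memLp_norm_rpow_iff aestronglyMeasurable_id hNe0 hNtop).mp ?_
  rw [ENNReal.div_self hNe0 hNtop, memLp_one_iff_integrable]
  have heq : ∀ x : ℝ, ‖id x‖ ^ ((N : ℝ≥0∞)).toReal = |x| ^ N := by
    intro x
    rw [ENNReal.toReal_natCast, Real.norm_eq_abs, Real.rpow_natCast]
    rfl
  exact (aux_integrable_abs_pow_gaussian v N).congr (ae_of_all _ fun x => (heq x).symm)
end AuxGauss

theorem Lp_rate_hermite_remainder_sum
    {Ω : Type*} [MeasureSpace Ω] [IsProbabilityMeasure (ℙ : Measure Ω)]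
    (Z : ℕ → Ω → ℝ) (hmeas : ∀ k, Measurable (Z k))
    (hGauss : ∀ (s : Finset ℕ) (c : ℕ → ℝ), ∃ v : NNReal,
      Measure.map (fun ω => ∑ i ∈ s, c i * Z i ω) ℙ = gaussianReal 0 v)
    (hStat : ∀ m : ℕ, Measure.map (fun ω (i : ℕ) => Z (i + m) ω) ℙ
      = Measure.map (fun ω (i : ℕ) => Z i ω) ℙ)
    (hL2 : Integrable (fun ω => (Z 0 ω) ^ 2) ℙ)
    (lam : ℝ) (hlam : 0 < lam) (q : ℕ) (hq : Even q) (hq0 : 0 < q) :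
    ∀ p : ℝ, 1 ≤ p → ∃ c : ℝ, 0 < c ∧ ∀ n : ℕ, 1 ≤ n →
      (∫ ω, |(1 / (n : ℝ)) * ∑ k ∈ Finset.range n,
          ((Polynomial.aeval (Z k ω - Real.exp (-lam * k) * Z 0 ω)
              (Polynomial.hermite q) : ℝ)
            - (Polynomial.aeval (Z k ω) (Polynomial.hermite q) : ℝ))| ^ p ∂ℙ) ^ (1 / p)
      ≤ c / n := by
  -- identify the law of each Z k
  obtain ⟨v, hv0⟩ := hGauss {0} (fun _ => 1)
  simp only [Finset.sum_singleton, one_mul] at hv0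
  have hlaw : ∀ k, Measure.map (Z k) ℙ = Measure.map (Z 0) ℙ := by
    intro k
    have h := congrArg (Measure.map (fun f : ℕ → ℝ => f 0)) (hStat k)
    rw [Measure.map_map (measurable_pi_apply 0)
        (measurable_pi_lambda _ fun i => hmeas _),
      Measure.map_map (measurable_pi_apply 0)
        (measurable_pi_lambda _ fun i => hmeas _)] at h
    have e1 : ((fun f : ℕ → ℝ => f 0) ∘ fun ω (i : ℕ) => Z (i + k) ω) = Z k := by
      funext ω; simp
    have e2 : ((fun f : ℕ → ℝ => f 0) ∘ fun ω (i : ℕ) => Z i ω) = Z 0 := by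
      funext ω; simp
    rwa [e1, e2] at h
  -- all moments of all Z k
  have hmem : ∀ (k : ℕ) (r : ℝ≥0∞), r ≠ ∞ → MemLp (Z k) r ℙ := by
    intro k r hr
    obtain ⟨N, hN⟩ : ∃ N : ℕ, r ≤ (N : ℝ≥0∞) := by
      refine ⟨⌈r.toReal⌉₊, ?_⟩
      rw [← ENNReal.ofReal_toReal hr]
      exact le_trans (ENNReal.ofReal_le_ofReal (Nat.le_ceil _)) (by simp)
    have hN' : MemLp (Z k) (N : ℝ≥0∞) ℙ := by
      have h := aux_memLp_gaussian v N
      rw [← hv0, ← hlaw k] at h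
      exact (memLp_map_measure_iff aestronglyMeasurable_id (hmeas k).aemeasurable).mp h
    exact hN'.mono_exponent hN
  have hsn : ∀ (k : ℕ) (r : ℝ≥0∞), eLpNorm (Z k) r ℙ = eLpNorm (Z 0) r ℙ := by
    intro k r
    have h1 : eLpNorm (Z k) r ℙ = eLpNorm id r (Measure.map (Z k) ℙ) :=
      (eLpNorm_map_measure aestronglyMeasurable_id (hmeas k).aemeasurable).symm
    have h2 : eLpNorm (Z 0) r ℙ = eLpNorm id r (Measure.map (Z 0) ℙ) :=
      (eLpNorm_map_measure aestronglyMeasurable_id (hmeas 0).aemeasurable).symm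
    rw [h1, h2, hlaw k]
  intro p hp
  have hp0R : (0:ℝ) < p := lt_of_lt_of_le zero_lt_one hp
  set p' : ℝ≥0∞ := ENNReal.ofReal p with hp'def
  have hp1' : 1 ≤ p' := ENNReal.one_le_ofReal.mpr hp
  have hp0 : p' ≠ 0 := (lt_of_lt_of_le zero_lt_one hp1').ne'
  have hptop : p' ≠ ∞ := ENNReal.ofReal_ne_top
  have h2ptop : 2 * p' ≠ ∞ := ENNReal.mul_ne_top ENNReal.ofNat_ne_top hptop
  have h2p1 : 1 ≤ 2 * p' := le_trans hp1' (le_mul_of_one_le_left zero_le one_le_two)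
  set r2 : ℝ≥0∞ := 2 * p' * ENNReal.ofReal q with hr2def
  have hr2top : r2 ≠ ∞ := ENNReal.mul_ne_top h2ptop ENNReal.ofReal_ne_top
  have hq1R : (1:ℝ) ≤ (q:ℝ) := by exact_mod_cast hq0
  have hr21 : 1 ≤ r2 := by
    calc (1:ℝ≥0∞) = 1 * 1 := (mul_one 1).symm
      _ ≤ (2 * p') * ENNReal.ofReal q :=
          mul_le_mul' h2p1 (ENNReal.one_le_ofReal.mpr hq1R)
  have hr20 : r2 ≠ 0 := by
    intro h; rw [h] at hr21; exact (not_le.mpr zero_lt_one) hr21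
  -- the functions
  set f : ℕ → Ω → ℝ := fun k ω =>
    (Polynomial.aeval (Z k ω - Real.exp (-lam * k) * Z 0 ω) (Polynomial.hermite q) : ℝ)
      - (Polynomial.aeval (Z k ω) (Polynomial.hermite q) : ℝ) with hfdef
  set u : ℕ → Ω → ℝ := fun k ω => 1 + |Z k ω| + |Z 0 ω| with hudef
  have hu_meas : ∀ k, Measurable (u k) := fun k =>
    (measurable_const.add (hmeas k).abs).add (hmeas 0).abs
  have hu_nonneg : ∀ k ω, 0 ≤ u k ω := by
    intro k ω
    have := abs_nonneg (Z k ω); have := abs_nonneg (Z 0 ω)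
    simp only [hudef]; linarith
  have hf_meas : ∀ k, Measurable (f k) := by
    intro k
    exact ((Polynomial.hermite q).continuous_aeval.measurable.comp
        ((hmeas k).sub ((hmeas 0).const_mul _))).sub
      ((Polynomial.hermite q).continuous_aeval.measurable.comp (hmeas k))
  set A2 : ℝ := (∑ i ∈ Finset.range (q + 1), |((Polynomial.hermite q).coeff i : ℝ)|) * 2 ^ q
    with hA2def
  have hA2 : 0 ≤ A2 := by positivity
  -- pointwise bound
  have hpt : ∀ k ω, ‖f k ω‖
      ≤ ‖(A2 * Real.exp (-lam * k)) * (Z 0 ω * (u k ω) ^ q)‖ := by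
    intro k ω
    set e : ℝ := Real.exp (-lam * k) with hedef
    have he0 : 0 < e := Real.exp_pos _
    have he1 : e ≤ 1 := by
      rw [hedef, ← Real.exp_zero]
      apply Real.exp_le_exp.mpr
      have : (0:ℝ) ≤ lam * k := by positivity
      linarith
    have hb : |f k ω| ≤ A2 * (|e * Z 0 ω| * (1 + |Z k ω| + |e * Z 0 ω|) ^ q) :=
      aux_poly_bound q (Z k ω) (e * Z 0 ω)
    have habs : |e * Z 0 ω| = e * |Z 0 ω| := by rw [abs_mul, abs_of_pos he0]
    have hbase : 1 + |Z k ω| + |e * Z 0 ω| ≤ u k ω := by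
      rw [habs]
      have h3 : e * |Z 0 ω| ≤ |Z 0 ω| := by nlinarith [abs_nonneg (Z 0 ω)]
      simp only [hudef]
      linarith
    have hbase0 : (0:ℝ) ≤ 1 + |Z k ω| + |e * Z 0 ω| := by positivity
    have hpow : (1 + |Z k ω| + |e * Z 0 ω|) ^ q ≤ (u k ω) ^ q :=
      pow_le_pow_left₀ hbase0 hbase q
    have h1 : |f k ω| ≤ A2 * (e * |Z 0 ω| * (u k ω) ^ q) := by
      refine hb.trans ?_
      rw [habs] at hpow ⊢
      have hnn : (0:ℝ) ≤ e * |Z 0 ω| := by positivity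
      exact mul_le_mul_of_nonneg_left (mul_le_mul_of_nonneg_left hpow hnn) hA2
    have h2 : ‖(A2 * e) * (Z 0 ω * (u k ω) ^ q)‖ = A2 * (e * |Z 0 ω| * (u k ω) ^ q) := by
      rw [Real.norm_eq_abs, abs_mul, abs_of_nonneg (mul_nonneg hA2 he0.le), abs_mul,
        abs_of_nonneg (pow_nonneg (hu_nonneg k ω) q)]
      ring
    rw [Real.norm_eq_abs (f k ω), h2]
    exact h1
  -- Hölder bound for the dominating product
  set B : ℝ≥0∞ := eLpNorm (Z 0) (2 * p') ℙ * (1 + 2 * eLpNorm (Z 0) r2 ℙ) ^ (q:ℝ) with hBdef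
  have hBtop : B ≠ ∞ := by
    refine ENNReal.mul_ne_top (hmem 0 (2*p') h2ptop).2.ne ?_
    refine ENNReal.rpow_ne_top_of_nonneg (by positivity) ?_
    exact ENNReal.add_ne_top.mpr ⟨ENNReal.one_ne_top,
      ENNReal.mul_ne_top ENNReal.ofNat_ne_top (hmem 0 r2 hr2top).2.ne⟩
  have hB : ∀ k, eLpNorm (fun ω => Z 0 ω * (u k ω) ^ q) p' ℙ ≤ B := by
    intro k
    have hpqr : 1 / p' = 1 / (2 * p') + 1 / (2 * p') := by
      rw [ENNReal.div_add_div_same, one_add_one_eq_two,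
        ← ENNReal.mul_div_mul_left 1 p' two_ne_zero ENNReal.ofNat_ne_top, mul_one]
    have hhold := eLpNorm_smul_le_mul_eLpNorm (μ := ℙ) (r := p') (p := 2 * p') (q := 2 * p')
      (f := fun ω => (u k ω) ^ q) ((hu_meas k).pow_const q).aestronglyMeasurable
      (φ := Z 0) (hmeas 0).aestronglyMeasurable
      (hpqr := ⟨by simpa only [one_div] using hpqr.symm⟩)
    have hupow : eLpNorm (fun ω => (u k ω) ^ q) (2 * p') ℙ
        ≤ (1 + 2 * eLpNorm (Z 0) r2 ℙ) ^ (q:ℝ) := by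
      have heq : (fun ω => (u k ω) ^ q) = fun ω => ‖u k ω‖ ^ (q:ℝ) := by
        funext ω
        rw [Real.norm_eq_abs, abs_of_nonneg (hu_nonneg k ω), ← Real.rpow_natCast]
      rw [heq, eLpNorm_norm_rpow (u k) (by positivity : (0:ℝ) < (q:ℝ))]
      refine ENNReal.rpow_le_rpow ?_ (by positivity)
      have habs : ∀ j, eLpNorm (fun ω => |Z j ω|) r2 ℙ = eLpNorm (Z j) r2 ℙ := by
        intro j
        have h : (fun ω => |Z j ω|) = fun ω => ‖Z j ω‖ := by
          funext ω; rw [Real.norm_eq_abs]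
        rw [h, eLpNorm_norm]
      have hone : eLpNorm (fun _ : Ω => (1:ℝ)) r2 ℙ = 1 := by
        rw [eLpNorm_const _ hr20 (IsProbabilityMeasure.ne_zero ℙ)]
        simp
      have t2 : eLpNorm (fun ω => 1 + |Z k ω|) r2 ℙ
          ≤ eLpNorm (fun _ : Ω => (1:ℝ)) r2 ℙ + eLpNorm (fun ω => |Z k ω|) r2 ℙ :=
        eLpNorm_add_le aestronglyMeasurable_const
          ((hmeas k).abs).aestronglyMeasurable hr21
      have t1 : eLpNorm (u k) r2 ℙ
          ≤ eLpNorm (fun ω => 1 + |Z k ω|) r2 ℙ + eLpNorm (fun ω => |Z 0 ω|) r2 ℙ :=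
        eLpNorm_add_le ((measurable_const.add (hmeas k).abs)).aestronglyMeasurable
          ((hmeas 0).abs).aestronglyMeasurable hr21
      calc eLpNorm (u k) r2 ℙ
          ≤ eLpNorm (fun ω => 1 + |Z k ω|) r2 ℙ + eLpNorm (fun ω => |Z 0 ω|) r2 ℙ := t1
        _ ≤ (eLpNorm (fun _ : Ω => (1:ℝ)) r2 ℙ + eLpNorm (fun ω => |Z k ω|) r2 ℙ)
              + eLpNorm (fun ω => |Z 0 ω|) r2 ℙ := add_le_add_left t2 _
        _ = 1 + (eLpNorm (Z 0) r2 ℙ + eLpNorm (Z 0) r2 ℙ) := by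
            rw [hone, habs k, habs 0, hsn k r2, add_assoc]
        _ = 1 + 2 * eLpNorm (Z 0) r2 ℙ := by rw [two_mul]
    calc eLpNorm (fun ω => Z 0 ω * (u k ω) ^ q) p' ℙ
        = eLpNorm (Z 0 • fun ω => (u k ω) ^ q) p' ℙ := rfl
      _ ≤ eLpNorm (Z 0) (2 * p') ℙ * eLpNorm (fun ω => (u k ω) ^ q) (2 * p') ℙ := hhold
      _ ≤ eLpNorm (Z 0) (2 * p') ℙ * (1 + 2 * eLpNorm (Z 0) r2 ℙ) ^ (q:ℝ) :=
          mul_le_mul_right hupow _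
  -- per-k eLpNorm bound
  have hfk : ∀ k, eLpNorm (f k) p' ℙ
      ≤ ENNReal.ofReal (Real.exp (-lam * k)) * (ENNReal.ofReal A2 * B) := by
    intro k
    calc eLpNorm (f k) p' ℙ
        ≤ eLpNorm (fun ω => (A2 * Real.exp (-lam * k)) * (Z 0 ω * (u k ω) ^ q)) p' ℙ :=
          eLpNorm_mono (hpt k)
      _ ≤ (‖A2 * Real.exp (-lam * k)‖ₑ : ℝ≥0∞)
            * eLpNorm (fun ω => Z 0 ω * (u k ω) ^ q) p' ℙ := by
          have h := eLpNorm_const_smul_le (c := A2 * Real.exp (-lam * k))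
            (f := fun ω => Z 0 ω * (u k ω) ^ q) (p := p') (μ := ℙ)
          exact h
      _ ≤ ENNReal.ofReal (A2 * Real.exp (-lam * k)) * B := by
          rw [Real.enorm_eq_ofReal (by positivity)]
          exact mul_le_mul_right (hB k) _
      _ = ENNReal.ofReal (Real.exp (-lam * k)) * (ENNReal.ofReal A2 * B) := by
          rw [ENNReal.ofReal_mul hA2, mul_comm (ENNReal.ofReal A2), mul_assoc]
  -- geometric sum bound
  set S : ℝ := (1 - Real.exp (-lam))⁻¹ with hSdef
  have hgeom : ∀ n : ℕ, (∑ k ∈ Finset.range n, Real.exp (-lam * k)) ≤ S := by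
    intro n
    set x : ℝ := Real.exp (-lam) with hxdef
    have hx0 : 0 ≤ x := (Real.exp_pos _).le
    have hx1 : x < 1 := by
      rw [hxdef, ← Real.exp_zero]
      exact Real.exp_lt_exp.mpr (by linarith)
    have hd : 0 < 1 - x := by linarith
    have heq : ∀ k : ℕ, Real.exp (-lam * k) = x ^ k := by
      intro k
      rw [hxdef, ← Real.exp_nat_mul]
      ring_nf
    rw [Finset.sum_congr rfl fun k _ => heq k, geom_sum_eq hx1.ne n]
    have h1 : (x ^ n - 1) / (x - 1) = (1 - x ^ n) / (1 - x) := by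
      rw [← neg_div_neg_eq]
      ring_nf
    rw [h1, hSdef, ← one_div, div_le_div_iff₀ hd hd]
    nlinarith [pow_nonneg hx0 n]
  set K : ℝ≥0∞ := ENNReal.ofReal S * (ENNReal.ofReal A2 * B) with hKdef
  have hKtop : K ≠ ∞ :=
    ENNReal.mul_ne_top ENNReal.ofReal_ne_top (ENNReal.mul_ne_top ENNReal.ofReal_ne_top hBtop)
  refine ⟨K.toReal + 1, by positivity, ?_⟩
  intro n hn
  have hnR : (0:ℝ) < n := by exact_mod_cast hn
  -- sum bound
  have hsum : eLpNorm (fun ω => ∑ k ∈ Finset.range n, f k ω) p' ℙ ≤ K := by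
    have h1 : eLpNorm (fun ω => ∑ k ∈ Finset.range n, f k ω) p' ℙ
        ≤ ∑ k ∈ Finset.range n, eLpNorm (f k) p' ℙ := by
      have heq : (fun ω => ∑ k ∈ Finset.range n, f k ω) = ∑ k ∈ Finset.range n, f k := by
        funext ω; simp only [Finset.sum_apply]
      rw [heq]
      exact eLpNorm_sum_le (fun k _ => (hf_meas k).aestronglyMeasurable) hp1'
    refine h1.trans ?_
    calc ∑ k ∈ Finset.range n, eLpNorm (f k) p' ℙ
        ≤ ∑ k ∈ Finset.range n,
            ENNReal.ofReal (Real.exp (-lam * k)) * (ENNReal.ofReal A2 * B) :=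
          Finset.sum_le_sum fun k _ => hfk k
      _ = (∑ k ∈ Finset.range n, ENNReal.ofReal (Real.exp (-lam * k)))
            * (ENNReal.ofReal A2 * B) := by rw [Finset.sum_mul]
      _ ≤ ENNReal.ofReal S * (ENNReal.ofReal A2 * B) := by
          refine mul_le_mul_left ?_ _
          rw [← ENNReal.ofReal_sum_of_nonneg (fun k _ => (Real.exp_pos _).le)]
          exact ENNReal.ofReal_le_ofReal (hgeom n)
  -- assemble
  set F : Ω → ℝ := fun ω => (1 / (n:ℝ)) * ∑ k ∈ Finset.range n, f k ω with hFdef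
  have hF_meas : Measurable F := (Finset.measurable_sum _ fun k _ => hf_meas k).const_mul _
  have hFsn : eLpNorm F p' ℙ ≤ ENNReal.ofReal (1 / (n:ℝ)) * K := by
    calc eLpNorm F p' ℙ
        = eLpNorm ((1 / (n:ℝ)) • (fun ω => ∑ k ∈ Finset.range n, f k ω)) p' ℙ := rfl
      _ ≤ (‖(1 / (n:ℝ))‖ₑ : ℝ≥0∞) * eLpNorm (fun ω => ∑ k ∈ Finset.range n, f k ω) p' ℙ := by
          have h := eLpNorm_const_smul_le (c := (1 / (n:ℝ)))
            (f := fun ω => ∑ k ∈ Finset.range n, f k ω) (p := p') (μ := ℙ)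
          exact h
      _ ≤ ENNReal.ofReal (1 / (n:ℝ)) * K := by
          rw [Real.enorm_eq_ofReal (by positivity)]
          exact mul_le_mul_right hsum _
  have hFmem : MemLp F p' ℙ :=
    ⟨hF_meas.aestronglyMeasurable,
      lt_of_le_of_lt hFsn (ENNReal.mul_lt_top ENNReal.ofReal_lt_top hKtop.lt_top)⟩
  have hLHS : (∫ ω, |F ω| ^ p ∂ℙ) ^ (1 / p) = (eLpNorm F p' ℙ).toReal := by
    rw [hFmem.eLpNorm_eq_integral_rpow_norm hp0 hptop]
    rw [ENNReal.toReal_ofReal]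
    · simp only [Real.norm_eq_abs, hp'def, ENNReal.toReal_ofReal hp0R.le, one_div]
    · exact Real.rpow_nonneg (integral_nonneg fun ω => Real.rpow_nonneg (norm_nonneg _) _) _
  have hfinal : (∫ ω, |F ω| ^ p ∂ℙ) ^ (1 / p) ≤ (K.toReal + 1) / n := by
    rw [hLHS]
    have h1 : (eLpNorm F p' ℙ).toReal ≤ (ENNReal.ofReal (1 / (n:ℝ)) * K).toReal :=
      ENNReal.toReal_mono (ENNReal.mul_ne_top ENNReal.ofReal_ne_top hKtop) hFsn
    rw [ENNReal.toReal_mul, ENNReal.toReal_ofReal (by positivity)] at h1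
    refine h1.trans ?_
    have heq : 1 / (n:ℝ) * K.toReal = K.toReal / n := by ring
    rw [heq]
    gcongr
    linarith [ENNReal.toReal_nonneg (a := K)]
  exact hfinal
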